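/- Let H be a finite dimensional Hopf algebra over K with antipode S, counit ε, and let 𝒢 ∈ G(H*) be the distinguished grouplike element of H* (defined by th = 𝒢(h)t for a nonzero left integral t ∈ H). For a positive integer n, the class [H*]^n = 1 in Pic(H) if and only if S^{2n} is an inner automorphism of H and 𝒢^n = ε. Consequently, the order of [H*] in Pic(H) is the least common multiple of the order of the class of S² in Out(H) and the order of 𝒢 in G(H*). -/

import Mathlib

open TensorProduct LinearMap Coalgebra HopfAlgebra

/-- Convolution product on `H* = Hom_K(H, K)` for a coalgebra `H`. -/
noncomputable def conv (K H : Type) [Field K] [Ring H] [HopfAlgebra K H]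
    (φ ψ : Module.Dual K H) : Module.Dual K H :=
  (LinearMap.mul' K K) ∘ₗ (TensorProduct.map φ ψ) ∘ₗ (Coalgebra.comul (R := K) (A := H))

/-- Convolution powers in `H*`, with `φ^0 = ε` (the counit). -/
noncomputable def convPow (K H : Type) [Field K] [Ring H] [HopfAlgebra K H]
    (φ : Module.Dual K H) : ℕ → Module.Dual K H
  | 0 => Coalgebra.counit (R := K)
  | n + 1 => conv K H φ (convPow K H φ n)

noncomputable section
variable {K : Type} [Field K]
variable {ι κ : Type*}

section CV
variable {A C : Type} [Ring A] [Algebra K A] [AddCommGroup C] [Module K C] [Coalgebra K C]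
def cv (f g : C →ₗ[K] A) : C →ₗ[K] A :=
  (LinearMap.mul' K A) ∘ₗ (TensorProduct.map f g) ∘ₗ (Coalgebra.comul (R := K))
lemma cv_repr (f g : C →ₗ[K] A) {a : C} (r : Coalgebra.Repr K a ι) :
    cv f g a = ∑ i ∈ r.index, f (r.left i) * g (r.right i) := by
  simp only [cv, LinearMap.comp_apply, ← r.eq, map_sum, TensorProduct.map_tmul,
    LinearMap.mul'_apply]
def uA : C →ₗ[K] A := (Algebra.linearMap K A) ∘ₗ (Coalgebra.counit (R := K))
lemma counit_right_reconstruct {a : C} (r : Coalgebra.Repr K a ι) :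
    ∑ i ∈ r.index, (counit (R := K) (r.right i)) • r.left i = a := by
  have h2 := congrArg (TensorProduct.rid K C) (Coalgebra.sum_tmul_counit_eq (R := K) r)
  rw [map_sum] at h2
  simp only [TensorProduct.rid_tmul] at h2
  rw [h2, one_smul]
lemma counit_left_reconstruct {a : C} (r : Coalgebra.Repr K a ι) :
    ∑ i ∈ r.index, (counit (R := K) (r.left i)) • r.right i = a := by
  have h2 := congrArg (TensorProduct.lid K C) (Coalgebra.sum_counit_tmul_eq (R := K) r)
  rw [map_sum] at h2
  simp only [TensorProduct.lid_tmul] at h2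
  rw [h2, one_smul]

lemma cv_uA_right (f : C →ₗ[K] A) : cv f (uA (K := K)) = f := by
  ext a
  rw [cv_repr f _ (ℛ K a)]
  calc ∑ i ∈ (ℛ K a).index, f ((ℛ K a).left i) * uA (K := K) ((ℛ K a).right i)
      = ∑ i ∈ (ℛ K a).index, f ((counit (R := K) ((ℛ K a).right i)) • (ℛ K a).left i) := by
        refine Finset.sum_congr rfl fun i _ => ?_
        rw [map_smul]
        simp only [uA, LinearMap.comp_apply, Algebra.linearMap_apply]
        rw [← Algebra.commutes, Algebra.smul_def]
    _ = f a := by rw [← map_sum, counit_right_reconstruct]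

lemma cv_uA_left (f : C →ₗ[K] A) : cv (uA (K := K)) f = f := by
  ext a
  rw [cv_repr _ f (ℛ K a)]
  calc ∑ i ∈ (ℛ K a).index, uA (K := K) ((ℛ K a).left i) * f ((ℛ K a).right i)
      = ∑ i ∈ (ℛ K a).index, f ((counit (R := K) ((ℛ K a).left i)) • (ℛ K a).right i) := by
        refine Finset.sum_congr rfl fun i _ => ?_
        rw [map_smul]
        simp only [uA, LinearMap.comp_apply, Algebra.linearMap_apply]
        rw [Algebra.smul_def]
    _ = f a := by rw [← map_sum, counit_left_reconstruct]

lemma cv_assoc (f g h : C →ₗ[K] A) : cv (cv f g) h = cv f (cv g h) := by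
  ext a
  set r := ℛ K a
  set r1 : ∀ i, Coalgebra.Repr K (r.left i) (C × C) := fun i => ℛ K (r.left i)
  set r2 : ∀ i, Coalgebra.Repr K (r.right i) (C × C) := fun i => ℛ K (r.right i)
  have base := Coalgebra.sum_tmul_tmul_eq (R := K) r r1 r2
  have happ := congrArg (LinearMap.mul' K A ∘ₗ
    TensorProduct.map f ((LinearMap.mul' K A) ∘ₗ TensorProduct.map g h)) base
  simp only [map_sum, LinearMap.comp_apply, TensorProduct.map_tmul,
    LinearMap.mul'_apply] at happ
  calc cv (cv f g) h a
      = ∑ i ∈ r.index, (cv f g) (r.left i) * h (r.right i) := cv_repr _ _ r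
    _ = ∑ i ∈ r.index, ∑ j ∈ (r1 i).index,
        f ((r1 i).left j) * ((g ((r1 i).right j)) * h (r.right i)) := by
        refine Finset.sum_congr rfl fun i _ => ?_
        rw [cv_repr f g (r1 i), Finset.sum_mul]
        exact Finset.sum_congr rfl fun j _ => mul_assoc _ _ _
    _ = ∑ i ∈ r.index, ∑ j ∈ (r2 i).index,
        f (r.left i) * (g ((r2 i).left j) * h ((r2 i).right j)) := happ
    _ = cv f (cv g h) a := by
        rw [cv_repr f _ r]
        refine Finset.sum_congr rfl fun i _ => ?_
        rw [cv_repr g h (r2 i), Finset.mul_sum]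

lemma cv_inv_unique {f g h : C →ₗ[K] A} (h1 : cv f g = uA (K := K))
    (h2 : cv h f = uA (K := K)) : g = h := by
  have : cv h (cv f g) = cv (cv h f) g := (cv_assoc h f g).symm
  rw [h1, h2, cv_uA_right, cv_uA_left] at this
  exact this.symm


end CV

variable {H : Type} [Ring H] [HopfAlgebra K H]

local notation "S" => HopfAlgebra.antipode (R := K) (A := H)

/-- a `Repr` for a product -/
def mulRepr {a b : H} (ra : Coalgebra.Repr K a ι) (rb : Coalgebra.Repr K b κ) :
    Coalgebra.Repr K (a * b) (ι × κ) where
  index := ra.index ×ˢ rb.index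
  left := fun p => ra.left p.1 * rb.left p.2
  right := fun p => ra.right p.1 * rb.right p.2
  eq := by
    rw [Finset.sum_product]
    calc ∑ i ∈ ra.index, ∑ j ∈ rb.index,
          (ra.left i * rb.left j) ⊗ₜ[K] (ra.right i * rb.right j)
        = ∑ i ∈ ra.index, ∑ j ∈ rb.index,
          (ra.left i ⊗ₜ[K] ra.right i) * (rb.left j ⊗ₜ[K] rb.right j) := by
          simp_rw [Algebra.TensorProduct.tmul_mul_tmul]
      _ = (∑ i ∈ ra.index, ra.left i ⊗ₜ[K] ra.right i) *
          (∑ j ∈ rb.index, rb.left j ⊗ₜ[K] rb.right j) := by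
          rw [Finset.sum_mul]
          exact Finset.sum_congr rfl fun i _ => (Finset.mul_sum _ _ _).symm
      _ = comul (R := K) a * comul (R := K) b := by rw [ra.eq, rb.eq]
      _ = comul (R := K) (a * b) := (Bialgebra.comul_mul a b).symm

lemma S_one : S (1 : H) = 1 := by
  have h := mul_antipode_rTensor_comul_apply (R := K) (A := H) 1
  rw [Bialgebra.comul_one, Algebra.TensorProduct.one_def] at h
  simpa using h

lemma counit_S (h : H) : counit (R := K) (S h) = counit (R := K) h := by
  set r := ℛ K h
  have h1 := congrArg (counit (R := K)) (sum_antipode_mul_eq_algebraMap_counit (R := K) r)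
  rw [map_sum, Bialgebra.counit_algebraMap] at h1
  calc counit (R := K) (S h)
      = counit (R := K) (S (∑ i ∈ r.index, (counit (R := K) (r.right i)) • r.left i)) := by
        rw [counit_right_reconstruct]
    _ = ∑ i ∈ r.index, counit (R := K) (S (r.left i)) * counit (R := K) (r.right i) := by
        rw [map_sum, map_sum]
        refine Finset.sum_congr rfl fun i _ => ?_
        rw [map_smul, map_smul, smul_eq_mul, mul_comm]
    _ = counit (R := K) h := by
        rw [← h1]
        exact Finset.sum_congr rfl fun i _ => (Bialgebra.counit_mul _ _).symm

lemma counit_tmul (x y : H) : Coalgebra.counit (R := K) (x ⊗ₜ[K] y) =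
    Coalgebra.counit (R := K) x * Coalgebra.counit (R := K) y := by
  have := congrArg (fun f => f (x ⊗ₜ[K] y))
    (congrArg DFunLike.coe (Bialgebra.TensorProduct.counit_eq_algHom_toLinearMap K K H H))
  exact (TensorProduct.counit_tmul x y).trans (mul_comm _ _)

lemma comul_tmul (x y : H) (rx : Coalgebra.Repr K x ι) (ry : Coalgebra.Repr K y κ) :
    Coalgebra.comul (R := K) (x ⊗ₜ[K] y) =
      ∑ i ∈ rx.index, ∑ j ∈ ry.index,
        (rx.left i ⊗ₜ[K] ry.left j) ⊗ₜ[K] (rx.right i ⊗ₜ[K] ry.right j) := by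
  have := congrArg (fun f => f (x ⊗ₜ[K] y))
    (congrArg DFunLike.coe (Bialgebra.TensorProduct.comul_eq_algHom_toLinearMap K K H H))
  simp only [AlgHom.toLinearMap_apply, AlgHom.coe_comp, Function.comp_apply,
    Algebra.TensorProduct.map_tmul] at this
  rw [this]
  rw [show (Bialgebra.comulAlgHom K H) x = Coalgebra.comul (R := K) x from rfl,
      show (Bialgebra.comulAlgHom K H) y = Coalgebra.comul (R := K) y from rfl,
      ← rx.eq, ← ry.eq]
  rw [TensorProduct.sum_tmul, map_sum]
  refine Finset.sum_congr rfl fun i _ => ?_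
  rw [TensorProduct.tmul_sum, map_sum]
  exact Finset.sum_congr rfl fun j _ => rfl

/-- a Repr for x ⊗ₜ y in the tensor-product coalgebra -/
def tmulRepr {x y : H} (rx : Coalgebra.Repr K x ι) (ry : Coalgebra.Repr K y κ) :
    Coalgebra.Repr K (x ⊗ₜ[K] y) (ι × κ) where
  index := rx.index ×ˢ ry.index
  left := fun p => rx.left p.1 ⊗ₜ[K] ry.left p.2
  right := fun p => rx.right p.1 ⊗ₜ[K] ry.right p.2
  eq := by rw [Finset.sum_product, comul_tmul x y rx ry]


lemma algebraMap_tensor (c : K) :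
    algebraMap K (H ⊗[K] H) c = (1 : H) ⊗ₜ[K] (algebraMap K H c) := by
  rw [Algebra.TensorProduct.algebraMap_apply, Algebra.algebraMap_eq_smul_one]
  exact TensorProduct.smul_tmul _ _ _

lemma S_mul (x y : H) : S (x * y) = S y * S x := by
  set M : H ⊗[K] H →ₗ[K] H := LinearMap.mul' K H with hM
  set F₁ : H ⊗[K] H →ₗ[K] H := (HopfAlgebra.antipode (R := K) (A := H)) ∘ₗ M with hF₁
  set F₂ : H ⊗[K] H →ₗ[K] H :=
    M ∘ₗ (TensorProduct.map (HopfAlgebra.antipode (R := K) (A := H))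
      (HopfAlgebra.antipode (R := K) (A := H))) ∘ₗ (TensorProduct.comm K H H).toLinearMap
    with hF₂
  have e1 : cv M F₁ = uA (K := K) := by
    apply TensorProduct.ext'
    intro a b
    set ra := ℛ K a; set rb := ℛ K b
    rw [cv_repr M F₁ (tmulRepr ra rb),
      show ((tmulRepr ra rb).index : Finset _) = ra.index ×ˢ rb.index from rfl]
    have : ∀ p ∈ ra.index ×ˢ rb.index,
        M ((tmulRepr ra rb).left p) * F₁ ((tmulRepr ra rb).right p)
        = (mulRepr ra rb).left p *
          HopfAlgebra.antipode (R := K) (A := H) ((mulRepr ra rb).right p) := by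
      intro p _
      simp only [hM, hF₁, tmulRepr, mulRepr, LinearMap.comp_apply, LinearMap.mul'_apply]
    refine Eq.trans (Finset.sum_congr rfl this) ?_
    have h2 := sum_mul_antipode_eq_algebraMap_counit (R := K) (mulRepr ra rb)
    rw [show ((mulRepr ra rb).index : Finset _) = ra.index ×ˢ rb.index from rfl] at h2
    refine h2.trans ?_
    simp only [uA, LinearMap.comp_apply, Algebra.linearMap_apply, _root_.counit_tmul,
      Bialgebra.counit_mul]
  have e2 : cv F₂ M = uA (K := K) := by
    apply TensorProduct.ext'
    intro a b
    set ra := ℛ K a; set rb := ℛ K b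
    rw [cv_repr F₂ M (tmulRepr ra rb),
      show ((tmulRepr ra rb).index : Finset _) = ra.index ×ˢ rb.index from rfl]
    have hterm : ∀ p ∈ ra.index ×ˢ rb.index,
        F₂ ((tmulRepr ra rb).left p) * M ((tmulRepr ra rb).right p)
        = HopfAlgebra.antipode (R := K) (A := H) (rb.left p.2) *
          ((HopfAlgebra.antipode (R := K) (A := H) (ra.left p.1) * ra.right p.1) *
            rb.right p.2) := by
      intro p _
      simp only [hM, hF₂, tmulRepr, LinearMap.comp_apply, LinearEquiv.coe_coe,
        TensorProduct.comm_tmul, TensorProduct.map_tmul, LinearMap.mul'_apply]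
      rw [mul_assoc, mul_assoc]
    refine Eq.trans (Finset.sum_congr rfl hterm) ?_
    refine Eq.trans (Finset.sum_product_right _ _ _) ?_
    have : ∀ j ∈ rb.index,
        (∑ i ∈ ra.index, HopfAlgebra.antipode (R := K) (A := H) (rb.left j) *
          ((HopfAlgebra.antipode (R := K) (A := H) (ra.left i) * ra.right i) * rb.right j))
        = counit (R := K) a •
            (HopfAlgebra.antipode (R := K) (A := H) (rb.left j) * rb.right j) := by
      intro j _
      rw [← Finset.mul_sum, ← Finset.sum_mul, sum_antipode_mul_eq_algebraMap_counit (R := K) ra]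
      rw [Algebra.algebraMap_eq_smul_one, smul_mul_assoc, one_mul, mul_smul_comm]
    refine Eq.trans (Finset.sum_congr rfl this) ?_
    rw [← Finset.smul_sum, sum_antipode_mul_eq_algebraMap_counit (R := K) rb]
    simp only [uA, LinearMap.comp_apply, Algebra.linearMap_apply, _root_.counit_tmul]
    simp [Algebra.algebraMap_eq_smul_one, smul_smul]
  have := cv_inv_unique e1 e2
  have happ := congrArg (fun f => f (x ⊗ₜ[K] y)) (congrArg DFunLike.coe this)
  simpa [hF₁, hF₂, hM] using happ

lemma A1 (u : H) (ru : Coalgebra.Repr K u ι) :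
    ∑ j ∈ ru.index, ((S (ru.left j)) ⊗ₜ[K] (1 : H)) * (comul (R := K) (ru.right j))
      = (1 : H) ⊗ₜ[K] u := by
  set r1 : ∀ j, Coalgebra.Repr K (ru.left j) (H × H) := fun j => ℛ K (ru.left j)
  set r2 : ∀ j, Coalgebra.Repr K (ru.right j) (H × H) := fun j => ℛ K (ru.right j)
  have base := Coalgebra.sum_tmul_tmul_eq (R := K) ru r1 r2
  set Φ : H ⊗[K] (H ⊗[K] H) →ₗ[K] H ⊗[K] H :=
    (TensorProduct.map ((LinearMap.mul' K H) ∘ₗ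
      (TensorProduct.map (HopfAlgebra.antipode (R := K) (A := H)) LinearMap.id))
      LinearMap.id) ∘ₗ (TensorProduct.assoc K H H H).symm.toLinearMap with hΦ
  have happ := congrArg Φ base
  simp only [map_sum, hΦ, LinearMap.comp_apply, LinearEquiv.coe_coe,
    TensorProduct.assoc_symm_tmul, TensorProduct.map_tmul, LinearMap.mul'_apply,
    LinearMap.id_coe, id_eq] at happ
  calc ∑ j ∈ ru.index, ((S (ru.left j)) ⊗ₜ[K] (1 : H)) * (comul (R := K) (ru.right j))
      = ∑ j ∈ ru.index, ∑ m ∈ (r2 j).index,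
          (S (ru.left j) * (r2 j).left m) ⊗ₜ[K] (r2 j).right m := by
        refine Finset.sum_congr rfl fun j _ => ?_
        rw [← (r2 j).eq, Finset.mul_sum]
        refine Finset.sum_congr rfl fun m _ => ?_
        rw [Algebra.TensorProduct.tmul_mul_tmul, one_mul]
    _ = ∑ j ∈ ru.index, ∑ k ∈ (r1 j).index,
          (S ((r1 j).left k) * (r1 j).right k) ⊗ₜ[K] ru.right j := happ.symm
    _ = ∑ j ∈ ru.index, (1 : H) ⊗ₜ[K] ((counit (R := K) (ru.left j)) • ru.right j) := by
        refine Finset.sum_congr rfl fun j _ => ?_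
        rw [← TensorProduct.sum_tmul, sum_antipode_mul_eq_algebraMap_counit (R := K) (r1 j),
          Algebra.algebraMap_eq_smul_one]
        rw [TensorProduct.smul_tmul, TensorProduct.tmul_smul]
    _ = (1 : H) ⊗ₜ[K] u := by
        rw [← TensorProduct.tmul_sum, counit_left_reconstruct]

lemma comul_S (h : H) (r : Coalgebra.Repr K h ι) :
    comul (R := K) (S h) = ∑ i ∈ r.index, (S (r.right i)) ⊗ₜ[K] (S (r.left i)) := by
  set D : H →ₗ[K] H ⊗[K] H := Coalgebra.comul (R := K) with hD
  set F₁ : H →ₗ[K] H ⊗[K] H := D ∘ₗ (HopfAlgebra.antipode (R := K) (A := H)) with hF₁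
  set F₂ : H →ₗ[K] H ⊗[K] H :=
    (TensorProduct.map (HopfAlgebra.antipode (R := K) (A := H))
      (HopfAlgebra.antipode (R := K) (A := H))) ∘ₗ (TensorProduct.comm K H H).toLinearMap ∘ₗ D
    with hF₂
  have e1 : cv D F₁ = uA (K := K) := by
    ext a
    rw [cv_repr D F₁ (ℛ K a)]
    calc ∑ i ∈ (ℛ K a).index, D ((ℛ K a).left i) * F₁ ((ℛ K a).right i)
        = ∑ i ∈ (ℛ K a).index,
            D ((ℛ K a).left i * S ((ℛ K a).right i)) := by
          refine Finset.sum_congr rfl fun i _ => ?_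
          simp only [hD, hF₁, LinearMap.comp_apply]
          exact (Bialgebra.comul_mul _ _).symm
      _ = D (∑ i ∈ (ℛ K a).index, (ℛ K a).left i * S ((ℛ K a).right i)) := (map_sum _ _ _).symm
      _ = uA (K := K) a := by
          rw [sum_mul_antipode_eq_algebraMap_counit (R := K) (ℛ K a)]
          simp only [hD, uA, LinearMap.comp_apply, Algebra.linearMap_apply]
          rw [Bialgebra.comul_algebraMap]
  have e2 : cv F₂ D = uA (K := K) := by
    ext a
    set r := ℛ K a with hr
    set r1 : ∀ i, Coalgebra.Repr K (r.left i) (H × H) := fun i => ℛ K (r.left i)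
    set r2 : ∀ i, Coalgebra.Repr K (r.right i) (H × H) := fun i => ℛ K (r.right i)
    have base := Coalgebra.sum_tmul_tmul_eq (R := K) r r1 r2
    set Ψ : H ⊗[K] (H ⊗[K] H) →ₗ[K] H ⊗[K] H :=
      (LinearMap.mul' K (H ⊗[K] H)) ∘ₗ
        (TensorProduct.map
          ((TensorProduct.map (HopfAlgebra.antipode (R := K) (A := H))
            (HopfAlgebra.antipode (R := K) (A := H))) ∘ₗ (TensorProduct.comm K H H).toLinearMap)
          (Coalgebra.comul (R := K))) ∘ₗ (TensorProduct.assoc K H H H).symm.toLinearMap with hΨ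
    have happ := congrArg Ψ base
    simp only [map_sum, hΨ, LinearMap.comp_apply, LinearEquiv.coe_coe,
      TensorProduct.assoc_symm_tmul, TensorProduct.map_tmul, LinearMap.mul'_apply,
      TensorProduct.comm_tmul] at happ
    calc cv F₂ D a
        = ∑ i ∈ r.index, F₂ (r.left i) * D (r.right i) := cv_repr F₂ D r
      _ = ∑ i ∈ r.index, ∑ k ∈ (r1 i).index,
          (S ((r1 i).right k) ⊗ₜ[K] S ((r1 i).left k)) * (comul (R := K) (r.right i)) := by
          refine Finset.sum_congr rfl fun i _ => ?_
          simp only [hF₂, hD, LinearMap.comp_apply, LinearEquiv.coe_coe]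
          rw [← (r1 i).eq, map_sum, map_sum, Finset.sum_mul]
          refine Finset.sum_congr rfl fun k _ => ?_
          rw [TensorProduct.comm_tmul, TensorProduct.map_tmul]
      _ = ∑ i ∈ r.index, ∑ j ∈ (r2 i).index,
          (S ((r2 i).left j) ⊗ₜ[K] S (r.left i)) * (comul (R := K) ((r2 i).right j)) := happ
      _ = ∑ i ∈ r.index, ((1 : H) ⊗ₜ[K] S (r.left i)) *
            (∑ j ∈ (r2 i).index,
              (S ((r2 i).left j) ⊗ₜ[K] (1 : H)) * (comul (R := K) ((r2 i).right j))) := by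
          refine Finset.sum_congr rfl fun i _ => ?_
          rw [Finset.mul_sum]
          refine Finset.sum_congr rfl fun j _ => ?_
          rw [← mul_assoc, Algebra.TensorProduct.tmul_mul_tmul, one_mul, mul_one]
      _ = ∑ i ∈ r.index, (1 : H) ⊗ₜ[K] (S (r.left i) * r.right i) := by
          refine Finset.sum_congr rfl fun i _ => ?_
          rw [A1 (r.right i) (r2 i), Algebra.TensorProduct.tmul_mul_tmul, one_mul]
      _ = uA (K := K) a := by
          rw [← TensorProduct.tmul_sum, sum_antipode_mul_eq_algebraMap_counit (R := K) r]
          simp only [uA, LinearMap.comp_apply, Algebra.linearMap_apply]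
          rw [algebraMap_tensor]
  have hFeq := cv_inv_unique e1 e2
  have happ := congrArg (fun f => f h) (congrArg DFunLike.coe hFeq)
  simp only [hF₁, hF₂, hD, LinearMap.comp_apply, LinearEquiv.coe_coe] at happ
  rw [happ]
  rw [← r.eq, map_sum, map_sum]
  refine Finset.sum_congr rfl fun i _ => ?_
  rw [TensorProduct.comm_tmul, TensorProduct.map_tmul]

/-- repr of `S h` obtained from a repr of `h` by the anti-comultiplicativity. -/
def SRepr {h : H} (r : Coalgebra.Repr K h ι) : Coalgebra.Repr K (S h) ι where
  index := r.index
  left := fun i => S (r.right i)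
  right := fun i => S (r.left i)
  eq := (comul_S h r).symm

lemma S_algebraMap (c : K) : S (algebraMap K H c) = algebraMap K H c := by
  rw [Algebra.algebraMap_eq_smul_one, map_smul, S_one]

section G
variable (G : H →ₐ[K] K)

lemma cv_G_GS : cv G.toLinearMap (G.toLinearMap ∘ₗ (HopfAlgebra.antipode (R := K) (A := H)))
    = uA (K := K) := by
  ext a
  rw [cv_repr _ _ (ℛ K a)]
  calc ∑ i ∈ (ℛ K a).index, G.toLinearMap ((ℛ K a).left i) *
        (G.toLinearMap ∘ₗ (HopfAlgebra.antipode (R := K) (A := H))) ((ℛ K a).right i)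
      = ∑ i ∈ (ℛ K a).index, G ((ℛ K a).left i * S ((ℛ K a).right i)) := by
        refine Finset.sum_congr rfl fun i _ => ?_
        simp only [LinearMap.comp_apply, AlgHom.toLinearMap_apply, map_mul]
    _ = G (∑ i ∈ (ℛ K a).index, (ℛ K a).left i * S ((ℛ K a).right i)) := (map_sum _ _ _).symm
    _ = uA (K := K) a := by
        rw [sum_mul_antipode_eq_algebraMap_counit (R := K) (ℛ K a), AlgHom.commutes]
        simp [uA]

lemma cv_GS_G : cv (G.toLinearMap ∘ₗ (HopfAlgebra.antipode (R := K) (A := H))) G.toLinearMap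
    = uA (K := K) := by
  ext a
  rw [cv_repr _ _ (ℛ K a)]
  calc ∑ i ∈ (ℛ K a).index,
        (G.toLinearMap ∘ₗ (HopfAlgebra.antipode (R := K) (A := H))) ((ℛ K a).left i) *
        G.toLinearMap ((ℛ K a).right i)
      = G (∑ i ∈ (ℛ K a).index, S ((ℛ K a).left i) * (ℛ K a).right i) := by
        rw [map_sum]
        refine Finset.sum_congr rfl fun i _ => ?_
        simp only [LinearMap.comp_apply, AlgHom.toLinearMap_apply, map_mul]
    _ = uA (K := K) a := by
        rw [sum_antipode_mul_eq_algebraMap_counit (R := K) (ℛ K a), AlgHom.commutes]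
        simp [uA]

lemma cv_GS_GSS : cv (G.toLinearMap ∘ₗ (HopfAlgebra.antipode (R := K) (A := H)))
    (G.toLinearMap ∘ₗ (HopfAlgebra.antipode (R := K) (A := H)) ∘ₗ
      (HopfAlgebra.antipode (R := K) (A := H))) = uA (K := K) := by
  ext a
  rw [cv_repr _ _ (ℛ K a)]
  calc ∑ i ∈ (ℛ K a).index,
        (G.toLinearMap ∘ₗ (HopfAlgebra.antipode (R := K) (A := H))) ((ℛ K a).left i) *
        (G.toLinearMap ∘ₗ (HopfAlgebra.antipode (R := K) (A := H)) ∘ₗ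
          (HopfAlgebra.antipode (R := K) (A := H))) ((ℛ K a).right i)
      = ∑ i ∈ (ℛ K a).index, G (S ((ℛ K a).left i * S ((ℛ K a).right i))) := by
        refine Finset.sum_congr rfl fun i _ => ?_
        simp only [LinearMap.comp_apply, AlgHom.toLinearMap_apply]
        rw [S_mul, map_mul, mul_comm]
    _ = G (S (∑ i ∈ (ℛ K a).index, (ℛ K a).left i * S ((ℛ K a).right i))) := by
        rw [map_sum, map_sum]
    _ = uA (K := K) a := by
        rw [sum_mul_antipode_eq_algebraMap_counit (R := K) (ℛ K a), S_algebraMap, AlgHom.commutes]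
        simp [uA]

lemma GS2 : ∀ h : H, G (S (S h)) = G h := by
  have h1 := cv_inv_unique (cv_GS_GSS G) (cv_G_GS G)
  intro h
  have := congrArg (fun f => f h) (congrArg DFunLike.coe h1)
  simpa using this

end G

/-- the right winding endomorphism `x ↦ ∑ φ(x₂) • x₁` -/
def tw (φ : Module.Dual K H) : H →ₗ[K] H :=
  (TensorProduct.rid K H).toLinearMap ∘ₗ (LinearMap.lTensor H φ) ∘ₗ (Coalgebra.comul (R := K))

lemma tw_repr (φ : Module.Dual K H) {a : H} (r : Coalgebra.Repr K a ι) :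
    tw φ a = ∑ i ∈ r.index, φ (r.right i) • r.left i := by
  simp only [tw, LinearMap.comp_apply, ← r.eq, map_sum, LinearMap.lTensor_tmul,
    LinearEquiv.coe_coe, TensorProduct.rid_tmul]

lemma tw_counit (a : H) : tw (Coalgebra.counit (R := K) (A := H)) a = a := by
  rw [tw_repr _ (ℛ K a)]
  exact counit_right_reconstruct _

lemma counit_tw (φ : Module.Dual K H) (a : H) :
    Coalgebra.counit (R := K) (tw φ a) = φ a := by
  rw [tw_repr _ (ℛ K a), map_sum]
  calc ∑ i ∈ (ℛ K a).index, Coalgebra.counit (R := K) (φ ((ℛ K a).right i) • (ℛ K a).left i)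
      = φ (∑ i ∈ (ℛ K a).index, Coalgebra.counit (R := K) ((ℛ K a).left i) • (ℛ K a).right i) := by
        rw [map_sum]
        refine Finset.sum_congr rfl fun i _ => ?_
        rw [map_smul, map_smul, smul_eq_mul, smul_eq_mul, mul_comm]
    _ = φ a := by rw [counit_left_reconstruct]

lemma tw_comp (φ ψ : Module.Dual K H) (a : H) :
    tw φ (tw ψ a) = tw (cv φ ψ) a := by
  set r := ℛ K a
  set r1 : ∀ i, Coalgebra.Repr K (r.left i) (H × H) := fun i => ℛ K (r.left i)
  set r2 : ∀ i, Coalgebra.Repr K (r.right i) (H × H) := fun i => ℛ K (r.right i)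
  have base := Coalgebra.sum_tmul_tmul_eq (R := K) r r1 r2
  set Φ : H ⊗[K] (H ⊗[K] H) →ₗ[K] H :=
    (TensorProduct.rid K H).toLinearMap ∘ₗ
      (LinearMap.lTensor H ((LinearMap.mul' K K) ∘ₗ (TensorProduct.map φ ψ))) with hΦ
  have happ := congrArg Φ base
  simp only [map_sum, hΦ, LinearMap.comp_apply, LinearMap.lTensor_tmul,
    TensorProduct.map_tmul, LinearMap.mul'_apply, LinearEquiv.coe_coe,
    TensorProduct.rid_tmul] at happ
  calc tw φ (tw ψ a)
      = ∑ i ∈ r.index, ψ (r.right i) • tw φ (r.left i) := by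
        rw [tw_repr ψ r, map_sum]
        exact Finset.sum_congr rfl fun i _ => (map_smul _ _ _)
    _ = ∑ i ∈ r.index, ∑ k ∈ (r1 i).index,
        (φ ((r1 i).right k) * ψ (r.right i)) • (r1 i).left k := by
        refine Finset.sum_congr rfl fun i _ => ?_
        rw [tw_repr φ (r1 i), Finset.smul_sum]
        refine Finset.sum_congr rfl fun k _ => ?_
        rw [smul_smul, mul_comm]
    _ = ∑ i ∈ r.index, ∑ k ∈ (r2 i).index,
        (φ ((r2 i).left k) * ψ ((r2 i).right k)) • r.left i := happ
    _ = tw (cv φ ψ) a := by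
        rw [tw_repr _ r]
        refine Finset.sum_congr rfl fun i _ => ?_
        rw [cv_repr φ ψ (r2 i), Finset.sum_smul]

lemma S2_tw_G (G : H →ₐ[K] K) (x : H) :
    S (S (tw G.toLinearMap x)) = tw G.toLinearMap (S (S x)) := by
  set r := ℛ K x
  calc S (S (tw G.toLinearMap x))
      = ∑ i ∈ r.index, G (r.right i) • S (S (r.left i)) := by
        rw [tw_repr _ r, map_sum, map_sum]
        refine Finset.sum_congr rfl fun i _ => ?_
        rw [map_smul, map_smul]
        rfl
    _ = ∑ i ∈ r.index, G (S (S (r.right i))) • S (S (r.left i)) := by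
        refine Finset.sum_congr rfl fun i _ => ?_
        rw [GS2]
    _ = tw G.toLinearMap (S (S x)) := by
        rw [tw_repr _ (SRepr (SRepr r))]
        rfl


section Integral
variable [FiniteDimensional K H] (lam : Module.Dual K H)

lemma sep {x y : H} (h : ∀ f : Module.Dual K H, f x = f y) : x = y := by
  have h0 : ∀ f : Module.Dual K H, f (x - y) = 0 := fun f => by
    rw [map_sub, h f, sub_self]
  have := (Module.forall_dual_apply_eq_zero_iff K (x - y)).mp h0
  exact sub_eq_zero.mp this

lemma E_lemma (hint : ∀ f : Module.Dual K H, cv f lam = f 1 • lam)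
    (a : H) (r : Coalgebra.Repr K a ι) :
    ∑ i ∈ r.index, lam (r.right i) • r.left i = lam a • 1 := by
  refine sep (K := K) fun f => ?_
  have h1 : cv f lam a = f 1 * lam a := by rw [hint f]; rfl
  rw [cv_repr f lam r] at h1
  calc f (∑ i ∈ r.index, lam (r.right i) • r.left i)
      = ∑ i ∈ r.index, f (r.left i) * lam (r.right i) := by
        rw [map_sum]
        refine Finset.sum_congr rfl fun i _ => ?_
        rw [map_smul, smul_eq_mul, mul_comm]
    _ = f 1 * lam a := h1
    _ = f (lam a • 1) := by rw [map_smul, smul_eq_mul, mul_comm]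

lemma Econ (hint : ∀ f : Module.Dual K H, cv f lam = f 1 • lam)
    (φ : Module.Dual K H) (u : H) (r : Coalgebra.Repr K u ι) :
    ∑ i ∈ r.index, φ (r.left i) * lam (r.right i) = lam u * φ 1 := by
  have h := congrArg φ (E_lemma lam hint u r)
  rw [map_sum, map_smul, smul_eq_mul] at h
  calc ∑ i ∈ r.index, φ (r.left i) * lam (r.right i)
      = ∑ i ∈ r.index, φ (lam (r.right i) • r.left i) := by
        refine Finset.sum_congr rfl fun i _ => ?_
        rw [map_smul, smul_eq_mul, mul_comm]
    _ = lam u * φ 1 := h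

lemma Y5 (hint : ∀ f : Module.Dual K H, cv f lam = f 1 • lam)
    (f : Module.Dual K H) (z w : H) (rz : Coalgebra.Repr K z ι) (rw' : Coalgebra.Repr K w κ) :
    ∑ j ∈ rw'.index, f (rw'.left j) * lam (z * rw'.right j)
      = ∑ i ∈ rz.index, f (S (rz.left i)) * lam (rz.right i * w) := by
  set r1 : ∀ i, Coalgebra.Repr K (rz.left i) (H × H) := fun i => ℛ K (rz.left i) with hr1
  set r2 : ∀ i, Coalgebra.Repr K (rz.right i) (H × H) := fun i => ℛ K (rz.right i) with hr2
  have base := Coalgebra.sum_tmul_tmul_eq (R := K) rz r1 r2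
  have shift : ∀ j, (∑ i ∈ rz.index, ∑ k ∈ (r1 i).index,
      f (S ((r1 i).left k) * ((r1 i).right k * rw'.left j)) * lam (rz.right i * rw'.right j))
    = ∑ i ∈ rz.index, ∑ k ∈ (r2 i).index,
      f (S (rz.left i) * ((r2 i).left k * rw'.left j)) * lam ((r2 i).right k * rw'.right j) := by
    intro j
    set Ξ : H ⊗[K] (H ⊗[K] H) →ₗ[K] K :=
      (LinearMap.mul' K K) ∘ₗ
      (TensorProduct.map (f ∘ₗ (LinearMap.mul' K H) ∘ₗ
          (TensorProduct.map (HopfAlgebra.antipode (R := K) (A := H))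
            (LinearMap.mulRight K (rw'.left j))))
        (lam ∘ₗ (LinearMap.mulRight K (rw'.right j))))
        ∘ₗ (TensorProduct.assoc K H H H).symm.toLinearMap with hΞ
    have happ := congrArg Ξ base
    simpa only [map_sum, hΞ, LinearMap.comp_apply, LinearEquiv.coe_coe,
      TensorProduct.assoc_symm_tmul, TensorProduct.map_tmul, LinearMap.mul'_apply,
      LinearMap.mulRight_apply] using happ
  calc ∑ j ∈ rw'.index, f (rw'.left j) * lam (z * rw'.right j)
      = ∑ j ∈ rw'.index, ∑ i ∈ rz.index,
          Coalgebra.counit (R := K) (rz.left i) *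
            (f (rw'.left j) * lam (rz.right i * rw'.right j)) := by
        refine Finset.sum_congr rfl fun j _ => ?_
        conv_lhs => rw [← counit_left_reconstruct rz]
        rw [Finset.sum_mul, map_sum, Finset.mul_sum]
        refine Finset.sum_congr rfl fun i _ => ?_
        rw [smul_mul_assoc, map_smul, smul_eq_mul]
        ring
    _ = ∑ j ∈ rw'.index, ∑ i ∈ rz.index, ∑ k ∈ (r1 i).index,
          f (S ((r1 i).left k) * ((r1 i).right k * rw'.left j)) *
            lam (rz.right i * rw'.right j) := by
        refine Finset.sum_congr rfl fun j _ => Finset.sum_congr rfl fun i _ => ?_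
        have hs := sum_antipode_mul_eq_smul (R := K) (r1 i)
        calc Coalgebra.counit (R := K) (rz.left i) *
              (f (rw'.left j) * lam (rz.right i * rw'.right j))
            = f ((Coalgebra.counit (R := K) (rz.left i) • (1 : H)) * rw'.left j) *
                lam (rz.right i * rw'.right j) := by
              rw [smul_mul_assoc, one_mul, map_smul, smul_eq_mul]
              ring
          _ = ∑ k ∈ (r1 i).index,
              f (S ((r1 i).left k) * ((r1 i).right k * rw'.left j)) *
                lam (rz.right i * rw'.right j) := by
              rw [← hs, Finset.sum_mul, map_sum, Finset.sum_mul]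
              refine Finset.sum_congr rfl fun k _ => ?_
              rw [mul_assoc]
    _ = ∑ j ∈ rw'.index, ∑ i ∈ rz.index, ∑ k ∈ (r2 i).index,
          f (S (rz.left i) * ((r2 i).left k * rw'.left j)) *
            lam ((r2 i).right k * rw'.right j) := by
        exact Finset.sum_congr rfl fun j _ => shift j
    _ = ∑ i ∈ rz.index, ∑ j ∈ rw'.index, ∑ k ∈ (r2 i).index,
          f (S (rz.left i) * ((r2 i).left k * rw'.left j)) *
            lam ((r2 i).right k * rw'.right j) := Finset.sum_comm
    _ = ∑ i ∈ rz.index, f (S (rz.left i)) * lam (rz.right i * w) := by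
        refine Finset.sum_congr rfl fun i _ => ?_
        rw [Finset.sum_comm]
        have hE := Econ lam hint (f ∘ₗ (LinearMap.mulLeft K (S (rz.left i))))
          (rz.right i * w) (mulRepr (r2 i) rw')
        calc ∑ k ∈ (r2 i).index, ∑ j ∈ rw'.index,
              f (S (rz.left i) * ((r2 i).left k * rw'.left j)) *
                lam ((r2 i).right k * rw'.right j)
            = lam (rz.right i * w) *
                (f ∘ₗ (LinearMap.mulLeft K (S (rz.left i)))) 1 := by
              exact (Finset.sum_product ((r2 i).index) rw'.index _).symm.trans hE
          _ = f (S (rz.left i)) * lam (rz.right i * w) := by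
              rw [LinearMap.comp_apply, LinearMap.mulLeft_apply, mul_one, mul_comm]

end Integral

lemma uA_counit : (uA (K := K) : H →ₗ[K] K) = Coalgebra.counit (R := K) := by
  ext a
  simp [uA]

section Main
variable [FiniteDimensional K H]
variable (t : H) (lam : Module.Dual K H) (G : H →ₐ[K] K)

lemma NDr (hinj : Function.Injective (fun a : H => (LinearMap.mulRight K a).dualMap lam))
    {A B : H} (h : ∀ y, lam (y * A) = lam (y * B)) : A = B := by
  apply hinj
  refine LinearMap.ext fun y => ?_
  simpa using h y

lemma I3 (hint : ∀ f : Module.Dual K H, cv f lam = f 1 • lam)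
    (hti : ∀ h : H, h * t = Coalgebra.counit (R := K) h • t)
    (hlam1 : lam t = 1) (m : H) (rT : Coalgebra.Repr K t ι) :
    ∑ i ∈ rT.index, lam (m * rT.right i) • rT.left i = S m := by
  refine sep (K := K) fun f => ?_
  set rm := ℛ K m
  calc f (∑ i ∈ rT.index, lam (m * rT.right i) • rT.left i)
      = ∑ i ∈ rT.index, f (rT.left i) * lam (m * rT.right i) := by
        rw [map_sum]
        refine Finset.sum_congr rfl fun i _ => ?_
        rw [map_smul, smul_eq_mul, mul_comm]
    _ = ∑ i ∈ rm.index, f (S (rm.left i)) * lam (rm.right i * t) := Y5 lam hint f m t rm rT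
    _ = ∑ i ∈ rm.index, f (S (rm.left i)) * Coalgebra.counit (R := K) (rm.right i) := by
        refine Finset.sum_congr rfl fun i _ => ?_
        rw [hti, map_smul, smul_eq_mul, hlam1, mul_one]
    _ = f (S m) := by
        conv_rhs => rw [← counit_right_reconstruct rm]
        rw [map_sum, map_sum]
        refine Finset.sum_congr rfl fun i _ => ?_
        rw [map_smul, map_smul, smul_eq_mul, mul_comm]
  
lemma Z1 (hint : ∀ f : Module.Dual K H, cv f lam = f 1 • lam)
    (hG : ∀ h : H, t * h = G h • t) (hlam1 : lam t = 1)
    (f : Module.Dual K H) (w : H) (rT : Coalgebra.Repr K t ι) :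
    ∑ i ∈ rT.index, f (S (rT.left i)) * lam (rT.right i * w)
      = f (tw G.toLinearMap w) := by
  set rw' := ℛ K w
  calc ∑ i ∈ rT.index, f (S (rT.left i)) * lam (rT.right i * w)
      = ∑ j ∈ rw'.index, f (rw'.left j) * lam (t * rw'.right j) :=
        (Y5 lam hint f t w rT rw').symm
    _ = ∑ j ∈ rw'.index, f (G (rw'.right j) • rw'.left j) := by
        refine Finset.sum_congr rfl fun j _ => ?_
        rw [hG, map_smul, smul_eq_mul, hlam1, mul_one, map_smul, smul_eq_mul, mul_comm]
    _ = f (tw G.toLinearMap w) := by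
        rw [tw_repr G.toLinearMap rw', map_sum]
        rfl

variable (ν : H ≃ₐ[K] H)

lemma key (hint : ∀ f : Module.Dual K H, cv f lam = f 1 • lam)
    (hti : ∀ h : H, h * t = Coalgebra.counit (R := K) h • t)
    (hG : ∀ h : H, t * h = G h • t) (hlam1 : lam t = 1)
    (hinj : Function.Injective (fun a : H => (LinearMap.mulRight K a).dualMap lam))
    (hν : ∀ a r : H, lam (a * r) = lam (r * ν a))
    (b : H) : S (S b) = tw G.toLinearMap (ν b) := by
  refine NDr lam hinj fun y => ?_
  set rT := ℛ K t
  have h3 := I3 t lam hint hti hlam1 b rT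
  calc lam (y * S (S b))
      = ∑ i ∈ rT.index, (lam ∘ₗ (LinearMap.mulLeft K y)) (S (rT.left i)) *
          lam (rT.right i * ν b) := by
        rw [← h3, map_sum]
        simp_rw [map_smul]
        rw [Finset.mul_sum, map_sum]
        refine Finset.sum_congr rfl fun i _ => ?_
        rw [mul_smul_comm, map_smul, smul_eq_mul]
        rw [LinearMap.comp_apply, LinearMap.mulLeft_apply]
        rw [hν b (rT.right i), mul_comm]
    _ = (lam ∘ₗ (LinearMap.mulLeft K y)) (tw G.toLinearMap (ν b)) :=
        Z1 t lam G hint hG hlam1 (lam ∘ₗ (LinearMap.mulLeft K y)) (ν b) rT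
    _ = lam (y * tw G.toLinearMap (ν b)) := rfl

lemma tw_G_inj (u v : H) (h : tw G.toLinearMap u = tw G.toLinearMap v) : u = v := by
  have h2 := congrArg (tw (G.toLinearMap ∘ₗ (HopfAlgebra.antipode (R := K) (A := H)))) h
  rw [tw_comp, tw_comp, cv_GS_G, uA_counit, tw_counit, tw_counit] at h2
  exact h2

lemma nu_tw_comm (hint : ∀ f : Module.Dual K H, cv f lam = f 1 • lam)
    (hti : ∀ h : H, h * t = Coalgebra.counit (R := K) h • t)
    (hG : ∀ h : H, t * h = G h • t) (hlam1 : lam t = 1)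
    (hinj : Function.Injective (fun a : H => (LinearMap.mulRight K a).dualMap lam))
    (hν : ∀ a r : H, lam (a * r) = lam (r * ν a))
    (y : H) : ν (tw G.toLinearMap y) = tw G.toLinearMap (ν y) := by
  apply tw_G_inj G
  calc tw G.toLinearMap (ν (tw G.toLinearMap y))
      = S (S (tw G.toLinearMap y)) :=
        (key t lam G ν hint hti hG hlam1 hinj hν (tw G.toLinearMap y)).symm
    _ = tw G.toLinearMap (S (S y)) := S2_tw_G G y
    _ = tw G.toLinearMap (tw G.toLinearMap (ν y)) := by
        rw [key t lam G ν hint hti hG hlam1 hinj hν y]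


lemma conv_eq_cv (f g : Module.Dual K H) : conv K H f g = cv f g := rfl

lemma convPow_zero : convPow K H G.toLinearMap 0 = Coalgebra.counit (R := K) := rfl

lemma convPow_succ (n : ℕ) :
    convPow K H G.toLinearMap (n + 1) = cv G.toLinearMap (convPow K H G.toLinearMap n) := rfl

lemma cpow_comm (n : ℕ) :
    cv (convPow K H G.toLinearMap n) G.toLinearMap
      = cv G.toLinearMap (convPow K H G.toLinearMap n) := by
  induction n with
  | zero =>
    rw [convPow_zero, ← uA_counit, cv_uA_left, cv_uA_right]
  | succ n ih =>
    rw [convPow_succ, cv_assoc, ih]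

lemma nu_pow_tw_comm (hint : ∀ f : Module.Dual K H, cv f lam = f 1 • lam)
    (hti : ∀ h : H, h * t = Coalgebra.counit (R := K) h • t)
    (hG : ∀ h : H, t * h = G h • t) (hlam1 : lam t = 1)
    (hinj : Function.Injective (fun a : H => (LinearMap.mulRight K a).dualMap lam))
    (hν : ∀ a r : H, lam (a * r) = lam (r * ν a))
    (n : ℕ) (y : H) : (ν ^ n) (tw G.toLinearMap y) = tw G.toLinearMap ((ν ^ n) y) := by
  induction n generalizing y with
  | zero => rw [pow_zero, AlgEquiv.one_apply, AlgEquiv.one_apply]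
  | succ n ih =>
    rw [pow_succ, AlgEquiv.mul_apply, AlgEquiv.mul_apply]
    rw [nu_tw_comm t lam G ν hint hti hG hlam1 hinj hν y, ih (ν y)]

lemma key2 (hint : ∀ f : Module.Dual K H, cv f lam = f 1 • lam)
    (hti : ∀ h : H, h * t = Coalgebra.counit (R := K) h • t)
    (hG : ∀ h : H, t * h = G h • t) (hlam1 : lam t = 1)
    (hinj : Function.Injective (fun a : H => (LinearMap.mulRight K a).dualMap lam))
    (hν : ∀ a r : H, lam (a * r) = lam (r * ν a))
    (n : ℕ) (x : H) :
    (⇑(HopfAlgebra.antipode (R := K) (A := H)))^[2 * n] x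
      = tw (convPow K H G.toLinearMap n) ((ν ^ n) x) := by
  induction n generalizing x with
  | zero =>
    rw [convPow_zero, tw_counit, Nat.mul_zero, Function.iterate_zero_apply,
      pow_zero, AlgEquiv.one_apply]
  | succ n ih =>
    have h2 : 2 * (n + 1) = 2 * n + 2 := by ring
    rw [h2, Function.iterate_add_apply]
    have hSS : (⇑(HopfAlgebra.antipode (R := K) (A := H)))^[2] x = S (S x) := rfl
    rw [hSS, ih (S (S x))]
    rw [key t lam G ν hint hti hG hlam1 hinj hν x]
    rw [nu_pow_tw_comm t lam G ν hint hti hG hlam1 hinj hν n (ν x)]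
    rw [tw_comp, cpow_comm, ← convPow_succ]
    rw [pow_succ, AlgEquiv.mul_apply]

end Main

lemma counit_iter [FiniteDimensional K H] (n : ℕ) (x : H) :
    Coalgebra.counit (R := K) ((⇑(HopfAlgebra.antipode (R := K) (A := H)))^[2 * n] x)
      = Coalgebra.counit (R := K) x := by
  induction n generalizing x with
  | zero => rw [Nat.mul_zero, Function.iterate_zero_apply]
  | succ n ih =>
    have h2 : 2 * (n + 1) = 2 * n + 2 := by ring
    rw [h2, Function.iterate_add_apply]
    have hSS : (⇑(HopfAlgebra.antipode (R := K) (A := H)))^[2] x = S (S x) := rfl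
    rw [hSS, ih (S (S x)), counit_S, counit_S]

end

/-- Theorem A: Let `H` be a finite dimensional Hopf algebra with
antipode `S` and counit `ε`, let `t` be a nonzero left integral in `H`, `𝒢 = G` the
distinguished grouplike element of `H*` (`t * h = G h • t`), let `lam` be a nonzero
left integral on `H` (a Frobenius form for `H`), and `ν` the associated Nakayama
automorphism (so that `[H*] = [_1H_ν]` in `Pic(H)` and `[H*]^n = 1 ↔ ν^n` is inner).
Then for every positive integer `n`: `[H*]^n = 1` in `Pic(H)` (i.e. `ν^n` is inner)
if and only if `S^{2n}` is inner and `G^n = ε` (convolution power). Consequently the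
order of `[H*]` in `Pic(H)` is the least common multiple of the order of the class of
`S²` in `Out(H)` and the order of `G` in `G(H*)`. -/
theorem stmt17 (K H : Type) [Field K] [Ring H] [HopfAlgebra K H] [FiniteDimensional K H]
    (t : H) (ht : t ≠ 0)
    (hti : ∀ h : H, h * t = Coalgebra.counit (R := K) h • t)
    (G : H →ₐ[K] K) (hG : ∀ h : H, t * h = G h • t)
    (lam : Module.Dual K H) (hlam : lam ≠ 0)
    (hint : ∀ f : Module.Dual K H, conv K H f lam = f 1 • lam)
    (hFrob : Function.Bijective fun a : H => (LinearMap.mulRight K a).dualMap lam)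
    (ν : H ≃ₐ[K] H) (hν : ∀ a r : H, lam (a * r) = lam (r * ν a)) :
    ∀ n : ℕ, 0 < n →
      ((∃ u : Hˣ, ∀ r : H, (ν ^ n) r = ↑u⁻¹ * r * ↑u) ↔
        ((∃ u : Hˣ, ∀ r : H,
            (⇑(HopfAlgebra.antipode (R := K) (A := H)))^[2 * n] r = ↑u⁻¹ * r * ↑u) ∧
          convPow K H G.toLinearMap n = Coalgebra.counit (R := K))) := by
  intro n _
  have hint' : ∀ f : Module.Dual K H, cv f lam = f 1 • lam := hint
  -- normalization of t
  have hlamt : lam t ≠ 0 := by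
    intro h0
    obtain ⟨a, ha⟩ := hFrob.2 (Coalgebra.counit (R := K))
    have ha' : ∀ r : H, lam (r * a) = Coalgebra.counit (R := K) r := fun r => by
      have := congrArg (fun f => f r) (congrArg DFunLike.coe ha)
      simpa using this
    have hta : ∀ y : H, lam (y * t) = lam (y * ((lam t) • a)) := fun y => by
      rw [hti y, map_smul, smul_eq_mul, mul_smul_comm, map_smul, smul_eq_mul, ha' y, mul_comm]
    have := NDr lam hFrob.1 hta
    rw [this, h0, zero_smul] at ht
    exact ht rfl
  set T : H := (lam t)⁻¹ • t with hT
  have htiT : ∀ h : H, h * T = Coalgebra.counit (R := K) h • T := fun h => by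
    rw [hT, mul_smul_comm, hti h, smul_comm]
  have hGT : ∀ h : H, T * h = G h • T := fun h => by
    rw [hT, smul_mul_assoc, hG h, smul_comm]
  have hlamT : lam T = 1 := by
    rw [hT, map_smul, smul_eq_mul, inv_mul_cancel₀ hlamt]
  have K2 := key2 T lam G ν hint' htiT hGT hlamT hFrob.1 hν n
  have CI := counit_iter (K := K) (H := H) n
  constructor
  · rintro ⟨u, hu⟩
    have hconj : ∀ y : H, (ν ^ n) ((u : H) * y * ((u⁻¹ : Hˣ) : H)) = y := fun y => by
      rw [hu]
      rw [mul_assoc ((u : H)) y (((u⁻¹ : Hˣ) : H))]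
      rw [Units.inv_mul_cancel_left]
      exact Units.inv_mul_cancel_right y u
    have hcu : Coalgebra.counit (R := K)
        ((((u : H)) * 1 * (((u⁻¹ : Hˣ) : H)))) = (1 : K) := by
      rw [mul_one, ← Units.val_mul, mul_inv_cancel, Units.val_one, Bialgebra.counit_one]
    have hPn : convPow K H G.toLinearMap n = Coalgebra.counit (R := K) := by
      refine LinearMap.ext fun y => ?_
      have h1 := K2 ((u : H) * y * ((u⁻¹ : Hˣ) : H))
      rw [hconj y] at h1
      have h2 := congrArg (Coalgebra.counit (R := K)) h1
      rw [CI, counit_tw] at h2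
      rw [← h2]
      rw [Bialgebra.counit_mul, Bialgebra.counit_mul]
      have : Coalgebra.counit (R := K) ((u : H)) * Coalgebra.counit (R := K) (((u⁻¹ : Hˣ) : H))
          = 1 := by
        rw [← Bialgebra.counit_mul, ← Units.val_mul, mul_inv_cancel, Units.val_one,
          Bialgebra.counit_one]
      calc Coalgebra.counit (R := K) ((u : H)) * Coalgebra.counit (R := K) y *
            Coalgebra.counit (R := K) (((u⁻¹ : Hˣ) : H))
          = Coalgebra.counit (R := K) y *
            (Coalgebra.counit (R := K) ((u : H)) *
              Coalgebra.counit (R := K) (((u⁻¹ : Hˣ) : H))) := by ring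
        _ = Coalgebra.counit (R := K) y := by rw [this, mul_one]
    refine ⟨⟨u, ?_⟩, hPn⟩
    intro r
    have := K2 r
    rw [hPn, tw_counit] at this
    rw [this, hu r]
  · rintro ⟨⟨u, hu⟩, hPn⟩
    refine ⟨u, fun r => ?_⟩
    have := K2 r
    rw [hPn, tw_counit] at this
    rw [← this, hu r]
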